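/- For the dynamical error model with the KYP/SPR conditions and the gradient update law θ̇ = −γ φ̂ e_y, if α ≥ 4‖Pb‖²‖θ*‖²/(λ_min(Q) λ_min(Q̄)), then the perturbation signal δ(t) = 2 e(t)ᵀP b (θ*ᵀφ̃(t)) decays exponentially: for all t ≥ t₀, |δ(t)| ≤ 2‖Pb‖‖θ*‖ √(V(t₀)/λ_min(P)) · √(λ_max(P̄)/λ_min(P̄)) · exp(−λ_min(Q̄)(t − t₀)/(2 λ_max(P̄))) · ‖φ̃(t₀)‖. -/

import Mathlib

open Matrix

lemma dotSelf_nonneg {n : ℕ} (x : Fin n → ℝ) : 0 ≤ x ⬝ᵥ x :=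
  Finset.sum_nonneg fun i _ => mul_self_nonneg _

lemma abs_dot_le {n : ℕ} (x y : Fin n → ℝ) :
    |x ⬝ᵥ y| ≤ Real.sqrt (x ⬝ᵥ x) * Real.sqrt (y ⬝ᵥ y) := by
  have h := Finset.sum_mul_sq_le_sq_mul_sq Finset.univ x y
  have : (x ⬝ᵥ y)^2 ≤ (x ⬝ᵥ x) * (y ⬝ᵥ y) := by
    simpa [dotProduct, sq, Finset.mul_sum] using h
  calc |x ⬝ᵥ y| = Real.sqrt ((x ⬝ᵥ y)^2) := (Real.sqrt_sq_eq_abs _).symm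
    _ ≤ Real.sqrt ((x ⬝ᵥ x) * (y ⬝ᵥ y)) := Real.sqrt_le_sqrt this
    _ = _ := Real.sqrt_mul (dotSelf_nonneg x) _

lemma hasDerivAt_dot {n : ℕ} {f g : ℝ → Fin n → ℝ} {f' g' : Fin n → ℝ} {t : ℝ}
    (hf : HasDerivAt f f' t) (hg : HasDerivAt g g' t) :
    HasDerivAt (fun s => f s ⬝ᵥ g s) (f' ⬝ᵥ g t + f t ⬝ᵥ g') t := by
  have h : HasDerivAt (fun s => ∑ i, f s i * g s i)
      (∑ i, (f' i * g t i + f t i * g' i)) t :=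
    HasDerivAt.fun_sum fun i _ => (hasDerivAt_pi.mp hf i).mul (hasDerivAt_pi.mp hg i)
  simpa [dotProduct, Finset.sum_add_distrib] using h

lemma hasDerivAt_mulVec' {n m : ℕ} (M : Matrix (Fin m) (Fin n) ℝ)
    {g : ℝ → Fin n → ℝ} {g' : Fin n → ℝ} {t : ℝ} (hg : HasDerivAt g g' t) :
    HasDerivAt (fun s => M.mulVec (g s)) (M.mulVec g') t := by
  rw [hasDerivAt_pi]
  intro i
  have h : HasDerivAt (fun s => ∑ j, M i j * g s j) (∑ j, M i j * g' j) t :=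
    HasDerivAt.fun_sum fun j _ => (hasDerivAt_pi.mp hg j).const_mul (M i j)
  simpa [Matrix.mulVec, dotProduct] using h

lemma posdef_lam_pos {n : ℕ} {Q : Matrix (Fin n) (Fin n) ℝ} (hQ : Q.PosDef) {lam : ℝ}
    (h : IsGreatest {r : ℝ | ∀ x : Fin n → ℝ, r * (x ⬝ᵥ x) ≤ x ⬝ᵥ Q.mulVec x} lam) :
    0 < lam := by
  rcases Nat.eq_zero_or_pos n with hn | hn
  · exfalso
    have h1 : (lam + 1) ∈ {r : ℝ | ∀ x : Fin n → ℝ, r * (x ⬝ᵥ x) ≤ x ⬝ᵥ Q.mulVec x} := by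
      intro x
      subst hn
      simp [dotProduct]
    have := h.2 h1
    linarith
  · -- compactness on the sphere
    set K : Set (Fin n → ℝ) := {x | x ⬝ᵥ x = 1} with hK
    have hcontQ : Continuous fun x : Fin n → ℝ => x ⬝ᵥ Q.mulVec x := by
      unfold dotProduct Matrix.mulVec
      exact continuous_finset_sum _ fun i _ => (continuous_apply i).mul
        (continuous_finset_sum _ fun j _ => continuous_const.mul (continuous_apply j))
    have hcontS : Continuous fun x : Fin n → ℝ => x ⬝ᵥ x := by
      unfold dotProduct
      exact continuous_finset_sum _ fun i _ => (continuous_apply i).mul (continuous_apply i)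
    have hclosed : IsClosed K := isClosed_eq hcontS continuous_const
    have hbdd : Bornology.IsBounded K := by
      apply Bornology.IsBounded.subset (Metric.isBounded_closedBall (x := (0 : Fin n → ℝ)) (r := 1))
      intro x hx
      simp only [Metric.mem_closedBall, dist_zero_right]
      rw [pi_norm_le_iff_of_nonneg zero_le_one]
      intro i
      rw [Real.norm_eq_abs, abs_le]
      have h1 : x i * x i ≤ 1 := by
        have := Finset.single_le_sum (f := fun j => x j * x j)
          (fun j _ => mul_self_nonneg _) (Finset.mem_univ i)
        calc x i * x i ≤ x ⬝ᵥ x := this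
          _ = 1 := hx
      constructor <;> nlinarith
    have hcompact : IsCompact K := Metric.isCompact_of_isClosed_isBounded hclosed hbdd
    have hne : K.Nonempty := by
      refine ⟨Pi.single ⟨0, hn⟩ 1, ?_⟩
      simp [hK, dotProduct, Pi.single_apply]
    obtain ⟨x₀, hx₀K, hx₀min⟩ := hcompact.exists_isMinOn hne hcontQ.continuousOn
    have hx₀ne : x₀ ≠ 0 := by
      intro h0
      rw [hK] at hx₀K
      simp only [Set.mem_setOf_eq, h0] at hx₀K
      simp [dotProduct] at hx₀K
    have hm : 0 < x₀ ⬝ᵥ Q.mulVec x₀ := by simpa using hQ.dotProduct_mulVec_pos hx₀ne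
    refine lt_of_lt_of_le hm (h.2 ?_)
    intro x
    rcases eq_or_ne x 0 with rfl | hx
    · simp [dotProduct]
    · have hxx : 0 < x ⬝ᵥ x :=
        lt_of_le_of_ne (dotSelf_nonneg x) fun hc => hx (dotProduct_self_eq_zero.mp hc.symm)
      set s : ℝ := Real.sqrt (x ⬝ᵥ x) with hs
      have hs0 : 0 < s := Real.sqrt_pos.mpr hxx
      have hs2 : s * s = x ⬝ᵥ x := Real.mul_self_sqrt hxx.le
      have hyK : (s⁻¹ • x) ∈ K := by
        simp only [hK, Set.mem_setOf_eq, smul_dotProduct, dotProduct_smul, smul_eq_mul]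
        field_simp
        nlinarith
      have := hx₀min hyK
      simp only [Set.mem_setOf_eq] at this
      have hy : (s⁻¹ • x) ⬝ᵥ Q.mulVec (s⁻¹ • x) = s⁻¹ * s⁻¹ * (x ⬝ᵥ Q.mulVec x) := by
        simp [smul_dotProduct, dotProduct_smul, Matrix.mulVec_smul, smul_eq_mul]; ring
      rw [hy] at this
      have h3 := mul_le_mul_of_nonneg_right this (mul_pos hs0 hs0).le
      have heq : (s⁻¹ * s⁻¹ * (x ⬝ᵥ Q.mulVec x)) * (s * s) = x ⬝ᵥ Q.mulVec x := by
        field_simp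
      rw [heq] at h3
      rw [← hs2]
      linarith [h3]

lemma antitoneOn_of_hasDerivAt_nonpos {g g' : ℝ → ℝ} {a : ℝ}
    (hd : ∀ t, a ≤ t → HasDerivAt g (g' t) t) (h0 : ∀ t, a ≤ t → g' t ≤ 0) :
    AntitoneOn g (Set.Ici a) := by
  apply antitoneOn_of_deriv_nonpos (convex_Ici a)
  · intro t ht
    exact (hd t ht).continuousAt.continuousWithinAt
  · intro t ht
    rw [interior_Ici] at ht
    exact (hd t ht.le).differentiableAt.differentiableWithinAt
  · intro t ht
    rw [interior_Ici] at ht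
    rw [(hd t ht.le).deriv]
    exact h0 t ht.le

lemma symm_dot {n : ℕ} {P : Matrix (Fin n) (Fin n) ℝ} (hPsym : P.IsSymm)
    (x y : Fin n → ℝ) : x ⬝ᵥ P.mulVec y = y ⬝ᵥ P.mulVec x := by
  rw [dotProduct_mulVec, ← Matrix.mulVec_transpose, hPsym.eq, dotProduct_comm]

lemma lyap_dot {n : ℕ} {A P Q : Matrix (Fin n) (Fin n) ℝ}
    (hLyap : Aᵀ * P + P * A = -Q) (x : Fin n → ℝ) :
    (A.mulVec x) ⬝ᵥ P.mulVec x + x ⬝ᵥ P.mulVec (A.mulVec x) = -(x ⬝ᵥ Q.mulVec x) := by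
  have h1 : x ⬝ᵥ (Aᵀ * P).mulVec x = (A.mulVec x) ⬝ᵥ P.mulVec x := by
    rw [← Matrix.mulVec_mulVec, dotProduct_mulVec, Matrix.vecMul_transpose]
  have h2 : x ⬝ᵥ P.mulVec (A.mulVec x) = x ⬝ᵥ (P * A).mulVec x := by
    rw [← Matrix.mulVec_mulVec]
  rw [← h1, h2, ← dotProduct_add, ← Matrix.add_mulVec, hLyap, Matrix.neg_mulVec, dotProduct_neg]

set_option maxHeartbeats 1600000

/-- For the dynamical error model with the KYP/SPR conditions and the gradient
update law `θ̇ = -γ φ̂ e_y`, if `α ≥ 4‖Pb‖²‖θ*‖²/(λ_min(Q) λ_min(Q̄))`, then the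
perturbation signal `δ(t) = 2 e(t)ᵀPb (θ*ᵀφ̃(t))` decays exponentially:
`|δ(t)| ≤ 2‖Pb‖‖θ*‖ √(V(t₀)/λ_min(P)) √(λ_max(P̄)/λ_min(P̄))
  exp(-λ_min(Q̄)(t-t₀)/(2λ_max(P̄))) ‖φ̃(t₀)‖` for all `t ≥ t₀`. -/
theorem kyp_perturbation_exponential_decay
    {n N : ℕ} (t₀ γ α : ℝ) (hγ : 0 < γ) (hα : 0 < α)
    (A : Matrix (Fin n) (Fin n) ℝ) (b c : Fin n → ℝ)
    (P Q : Matrix (Fin n) (Fin n) ℝ)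
    (hPsym : P.IsSymm) (hP : P.PosDef) (hQsym : Q.IsSymm) (hQ : Q.PosDef)
    (hLyap : Aᵀ * P + P * A = -Q) (hPb : P.mulVec b = c)
    (Λ Pbar Qbar : Matrix (Fin N) (Fin N) ℝ)
    (hPbarSym : Pbar.IsSymm) (hPbar : Pbar.PosDef)
    (hQbarSym : Qbar.IsSymm) (hQbar : Qbar.PosDef)
    (hLyapBar : Λᵀ * Pbar + Pbar * Λ = -Qbar)
    (lamQ lamQbar : ℝ)
    (hlamQ : IsGreatest {r : ℝ | ∀ x : Fin n → ℝ, r * (x ⬝ᵥ x) ≤ x ⬝ᵥ Q.mulVec x} lamQ)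
    (hlamQbar : IsGreatest
      {r : ℝ | ∀ x : Fin N → ℝ, r * (x ⬝ᵥ x) ≤ x ⬝ᵥ Qbar.mulVec x} lamQbar)
    (θstar : Fin N → ℝ)
    (hαbig : 4 * (P.mulVec b ⬝ᵥ P.mulVec b) * (θstar ⬝ᵥ θstar) / (lamQ * lamQbar) ≤ α)
    (e : ℝ → Fin n → ℝ) (θ φhat φtil : ℝ → Fin N → ℝ)
    (ey : ℝ → ℝ) (hey : ∀ t, ey t = c ⬝ᵥ e t)
    (hde : ∀ t, t₀ ≤ t → HasDerivAt e
      (A.mulVec (e t) + ((θ t - θstar) ⬝ᵥ φhat t) • b + (θstar ⬝ᵥ φtil t) • b) t)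
    (hdφ : ∀ t, t₀ ≤ t → HasDerivAt φtil (Λ.mulVec (φtil t)) t)
    (hdθ : ∀ t, t₀ ≤ t → HasDerivAt θ ((-(γ * ey t)) • φhat t) t)
    (V : ℝ → ℝ)
    (hV : ∀ t, V t = γ⁻¹ * ((θ t - θstar) ⬝ᵥ (θ t - θstar))
      + e t ⬝ᵥ P.mulVec (e t) + α * (φtil t ⬝ᵥ Pbar.mulVec (φtil t)))     (lamMinP lamMinPbar lamMaxPbar : ℝ)
    (hlamMinP : IsGreatest
      {r : ℝ | ∀ x : Fin n → ℝ, r * (x ⬝ᵥ x) ≤ x ⬝ᵥ P.mulVec x} lamMinP)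
    (hlamMinPbar : IsGreatest
      {r : ℝ | ∀ x : Fin N → ℝ, r * (x ⬝ᵥ x) ≤ x ⬝ᵥ Pbar.mulVec x} lamMinPbar)
    (hlamMaxPbar : IsLeast
      {r : ℝ | ∀ x : Fin N → ℝ, x ⬝ᵥ Pbar.mulVec x ≤ r * (x ⬝ᵥ x)} lamMaxPbar)
    (δ : ℝ → ℝ)
    (hδ : ∀ t, δ t = 2 * (e t ⬝ᵥ P.mulVec b) * (θstar ⬝ᵥ φtil t)) :
    ∀ t, t₀ ≤ t →
      |δ t| ≤ 2 * Real.sqrt (P.mulVec b ⬝ᵥ P.mulVec b) * Real.sqrt (θstar ⬝ᵥ θstar)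
        * Real.sqrt (V t₀ / lamMinP)
        * Real.sqrt (lamMaxPbar / lamMinPbar)
        * Real.exp (-(lamQbar * (t - t₀)) / (2 * lamMaxPbar))
        * Real.sqrt (φtil t₀ ⬝ᵥ φtil t₀) := by
  have hVf : V = fun s => γ⁻¹ * ((θ s - θstar) ⬝ᵥ (θ s - θstar))
      + e s ⬝ᵥ P.mulVec (e s) + α * (φtil s ⬝ᵥ Pbar.mulVec (φtil s)) := funext hV
  have heyf : ey = fun s => c ⬝ᵥ e s := funext hey
  subst heyf
  intro t ht
  have hlamQ0 : 0 < lamQ := posdef_lam_pos hQ hlamQ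
  have hlamQbar0 : 0 < lamQbar := posdef_lam_pos hQbar hlamQbar
  have hlamMinP0 : 0 < lamMinP := posdef_lam_pos hP hlamMinP
  have hlamMinPbar0 : 0 < lamMinPbar := posdef_lam_pos hPbar hlamMinPbar
  have hlamMaxPbar0 : 0 < lamMaxPbar := by
    rcases Nat.eq_zero_or_pos N with hN | hN
    · exfalso
      have h1 : (lamQbar + 1) ∈ {r : ℝ | ∀ x : Fin N → ℝ, r * (x ⬝ᵥ x) ≤ x ⬝ᵥ Qbar.mulVec x} := by
        intro x
        subst hN
        simp [dotProduct]
      linarith [hlamQbar.2 h1]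
    · set x : Fin N → ℝ := Pi.single ⟨0, hN⟩ 1 with hx
      have hxx : x ⬝ᵥ x = 1 := by simp [hx, dotProduct, Pi.single_apply]
      have h1 := hlamMinPbar.1 x
      have h2 := hlamMaxPbar.1 x
      rw [hxx, mul_one] at h1 h2
      linarith
  -- the Lyapunov derivative
  set Vd : ℝ → ℝ := fun s =>
    γ⁻¹ * ((((-(γ * (c ⬝ᵥ e s))) • φhat s) ⬝ᵥ (θ s - θstar))
        + ((θ s - θstar) ⬝ᵥ ((-(γ * (c ⬝ᵥ e s))) • φhat s)))
    + ((A.mulVec (e s) + ((θ s - θstar) ⬝ᵥ φhat s) • b + (θstar ⬝ᵥ φtil s) • b) ⬝ᵥ P.mulVec (e s)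
       + e s ⬝ᵥ P.mulVec (A.mulVec (e s) + ((θ s - θstar) ⬝ᵥ φhat s) • b + (θstar ⬝ᵥ φtil s) • b))
    + α * ((Λ.mulVec (φtil s)) ⬝ᵥ Pbar.mulVec (φtil s)
       + φtil s ⬝ᵥ Pbar.mulVec (Λ.mulVec (φtil s))) with hVdDef
  have hdV : ∀ s, t₀ ≤ s → HasDerivAt V (Vd s) s := by
    intro s hs
    rw [hVf]
    have hθ' : HasDerivAt (fun s => θ s - θstar) ((-(γ * (c ⬝ᵥ e s))) • φhat s) s :=
      (hdθ s hs).sub_const θstar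
    exact (((hasDerivAt_dot hθ' hθ').const_mul γ⁻¹).add
      (hasDerivAt_dot (hde s hs) (hasDerivAt_mulVec' P (hde s hs)))).add
      ((hasDerivAt_dot (hdφ s hs) (hasDerivAt_mulVec' Pbar (hdφ s hs))).const_mul α)
  have hVd_simp : ∀ s, Vd s = -(e s ⬝ᵥ Q.mulVec (e s))
      + 2 * (θstar ⬝ᵥ φtil s) * (e s ⬝ᵥ P.mulVec b)
      - α * (φtil s ⬝ᵥ Qbar.mulVec (φtil s)) := by
    intro s
    have hc : c ⬝ᵥ e s = e s ⬝ᵥ P.mulVec b := by rw [← hPb, dotProduct_comm]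
    have hγγ : γ⁻¹ * γ = 1 := inv_mul_cancel₀ hγ.ne'
    have hA := lyap_dot hLyap (e s)
    have hB := lyap_dot hLyapBar (φtil s)
    simp only [hVdDef, Matrix.mulVec_add, Matrix.mulVec_smul, add_dotProduct, dotProduct_add,
      smul_dotProduct, dotProduct_smul, smul_eq_mul]
    rw [symm_dot hPsym b (e s), hc, dotProduct_comm (φhat s) (θ s - θstar)]
    linear_combination hA + α * hB
      + (-2 * (e s ⬝ᵥ P.mulVec b) * ((θ s - θstar) ⬝ᵥ φhat s)) * hγγ
  have hVd_le : ∀ s, t₀ ≤ s → Vd s ≤ 0 := by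
    intro s _
    rw [hVd_simp s]
    set u := Real.sqrt (e s ⬝ᵥ e s) with hu
    set v := Real.sqrt (φtil s ⬝ᵥ φtil s) with hv
    set a := Real.sqrt (P.mulVec b ⬝ᵥ P.mulVec b) with ha
    set b' := Real.sqrt (θstar ⬝ᵥ θstar) with hb'
    have hu2 : u^2 = e s ⬝ᵥ e s := Real.sq_sqrt (dotSelf_nonneg _)
    have hv2 : v^2 = φtil s ⬝ᵥ φtil s := Real.sq_sqrt (dotSelf_nonneg _)
    have ha2 : a^2 = P.mulVec b ⬝ᵥ P.mulVec b := Real.sq_sqrt (dotSelf_nonneg _)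
    have hb2 : b'^2 = θstar ⬝ᵥ θstar := Real.sq_sqrt (dotSelf_nonneg _)
    have hu0 : 0 ≤ u := Real.sqrt_nonneg _
    have hv0 : 0 ≤ v := Real.sqrt_nonneg _
    have ha0 : 0 ≤ a := Real.sqrt_nonneg _
    have hb0 : 0 ≤ b' := Real.sqrt_nonneg _
    have hEQ : lamQ * u^2 ≤ e s ⬝ᵥ Q.mulVec (e s) := by
      rw [hu2]; exact hlamQ.1 (e s)
    have hΦQ : lamQbar * v^2 ≤ φtil s ⬝ᵥ Qbar.mulVec (φtil s) := by
      rw [hv2]; exact hlamQbar.1 (φtil s)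
    have h4 : 4 * (a^2 * b'^2) ≤ α * (lamQ * lamQbar) := by
      rw [ha2, hb2]
      rw [div_le_iff₀ (mul_pos hlamQ0 hlamQbar0)] at hαbig
      linarith
    have hxy : (θstar ⬝ᵥ φtil s) * (e s ⬝ᵥ P.mulVec b) ≤ (b' * v) * (u * a) := by
      calc (θstar ⬝ᵥ φtil s) * (e s ⬝ᵥ P.mulVec b)
          ≤ |(θstar ⬝ᵥ φtil s) * (e s ⬝ᵥ P.mulVec b)| := le_abs_self _
        _ = |θstar ⬝ᵥ φtil s| * |e s ⬝ᵥ P.mulVec b| := abs_mul _ _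
        _ ≤ (b' * v) * (u * a) := by
            apply mul_le_mul (abs_dot_le _ _) (abs_dot_le _ _) (abs_nonneg _)
            positivity
    have h5 : 2 * (a * b') * (u * v) ≤ lamQ * u^2 + α * lamQbar * v^2 := by
      nlinarith [sq_nonneg (lamQ * u - a * b' * v),
        mul_le_mul_of_nonneg_right h4 (sq_nonneg v), hlamQ0,
        mul_nonneg (mul_nonneg (mul_nonneg ha0 ha0) (mul_nonneg hb0 hb0)) (sq_nonneg v)]
    have key : 2 * (θstar ⬝ᵥ φtil s) * (e s ⬝ᵥ P.mulVec b)
        ≤ lamQ * u^2 + α * lamQbar * v^2 := by nlinarith [hxy, h5]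
    have hΦQ' : α * (lamQbar * v^2) ≤ α * (φtil s ⬝ᵥ Qbar.mulVec (φtil s)) :=
      mul_le_mul_of_nonneg_left hΦQ hα.le
    linarith [hEQ, hΦQ', key]
  have hVmono := antitoneOn_of_hasDerivAt_nonpos hdV hVd_le
  -- bound on e
  have hVt : V t ≤ V t₀ := hVmono (Set.self_mem_Ici) ht ht
  have hePe : e t ⬝ᵥ P.mulVec (e t) ≤ V t₀ := by
    rw [hV t] at hVt
    have h1 : 0 ≤ γ⁻¹ * ((θ t - θstar) ⬝ᵥ (θ t - θstar)) := by
      have := dotSelf_nonneg (θ t - θstar); positivity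
    have h2 : 0 ≤ φtil t ⬝ᵥ Pbar.mulVec (φtil t) := by
      have := hlamMinPbar.1 (φtil t)
      nlinarith [dotSelf_nonneg (φtil t)]
    nlinarith
  have heBound : e t ⬝ᵥ e t ≤ V t₀ / lamMinP := by
    rw [le_div_iff₀ hlamMinP0]
    have := hlamMinP.1 (e t)
    linarith
  -- exponential decay of φtil
  set k : ℝ := lamQbar / lamMaxPbar with hkdef
  have hk0 : 0 ≤ k := by positivity
  have hkmax : k * lamMaxPbar = lamQbar := div_mul_cancel₀ _ hlamMaxPbar0.ne'
  have hdW : ∀ s, t₀ ≤ s → HasDerivAt (fun s => φtil s ⬝ᵥ Pbar.mulVec (φtil s))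
      (-(φtil s ⬝ᵥ Qbar.mulVec (φtil s))) s := by
    intro s hs
    have h := hasDerivAt_dot (hdφ s hs) (hasDerivAt_mulVec' Pbar (hdφ s hs))
    rwa [lyap_dot hLyapBar (φtil s)] at h
  have hdg : ∀ s, t₀ ≤ s → HasDerivAt
      (fun s => Real.exp (k * (s - t₀)) * (φtil s ⬝ᵥ Pbar.mulVec (φtil s)))
      (Real.exp (k * (s - t₀)) * (k * 1) * (φtil s ⬝ᵥ Pbar.mulVec (φtil s))
        + Real.exp (k * (s - t₀)) * (-(φtil s ⬝ᵥ Qbar.mulVec (φtil s)))) s := by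
    intro s hs
    exact (HasDerivAt.exp (((hasDerivAt_id s).sub_const t₀).const_mul k)).mul (hdW s hs)
  have hWd_le : ∀ s, t₀ ≤ s →
      Real.exp (k * (s - t₀)) * (k * 1) * (φtil s ⬝ᵥ Pbar.mulVec (φtil s))
        + Real.exp (k * (s - t₀)) * (-(φtil s ⬝ᵥ Qbar.mulVec (φtil s))) ≤ 0 := by
    intro s _
    have hbound : k * (φtil s ⬝ᵥ Pbar.mulVec (φtil s)) ≤ φtil s ⬝ᵥ Qbar.mulVec (φtil s) := by
      calc k * (φtil s ⬝ᵥ Pbar.mulVec (φtil s))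
          ≤ k * (lamMaxPbar * (φtil s ⬝ᵥ φtil s)) :=
            mul_le_mul_of_nonneg_left (hlamMaxPbar.1 (φtil s)) hk0
        _ = lamQbar * (φtil s ⬝ᵥ φtil s) := by rw [← mul_assoc, hkmax]
        _ ≤ _ := hlamQbar.1 (φtil s)
    nlinarith [Real.exp_pos (k * (s - t₀))]
  have hgmono := antitoneOn_of_hasDerivAt_nonpos hdg hWd_le
  have hgt : Real.exp (k * (t - t₀)) * (φtil t ⬝ᵥ Pbar.mulVec (φtil t))
      ≤ φtil t₀ ⬝ᵥ Pbar.mulVec (φtil t₀) := by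
    have := hgmono (Set.self_mem_Ici) ht ht
    simpa using this
  have hΦBound : φtil t ⬝ᵥ φtil t ≤ (lamMaxPbar / lamMinPbar)
      * Real.exp (-(k * (t - t₀))) * (φtil t₀ ⬝ᵥ φtil t₀) := by
    have h1 : lamMinPbar * (φtil t ⬝ᵥ φtil t) ≤ φtil t ⬝ᵥ Pbar.mulVec (φtil t) :=
      hlamMinPbar.1 (φtil t)
    have h2 : φtil t₀ ⬝ᵥ Pbar.mulVec (φtil t₀) ≤ lamMaxPbar * (φtil t₀ ⬝ᵥ φtil t₀) :=
      hlamMaxPbar.1 (φtil t₀)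
    have hexp : Real.exp (-(k * (t - t₀))) * Real.exp (k * (t - t₀)) = 1 := by
      rw [← Real.exp_add]; simp
    have h3 : φtil t ⬝ᵥ Pbar.mulVec (φtil t)
        ≤ Real.exp (-(k * (t - t₀))) * (lamMaxPbar * (φtil t₀ ⬝ᵥ φtil t₀)) := by
      have h4 := mul_le_mul_of_nonneg_left hgt (Real.exp_pos (-(k * (t - t₀)))).le
      rw [← mul_assoc, hexp, one_mul] at h4
      calc φtil t ⬝ᵥ Pbar.mulVec (φtil t)
          ≤ Real.exp (-(k * (t - t₀))) * (φtil t₀ ⬝ᵥ Pbar.mulVec (φtil t₀)) := h4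
        _ ≤ _ := mul_le_mul_of_nonneg_left h2 (Real.exp_pos _).le
    rw [div_mul_eq_mul_div, div_mul_eq_mul_div, le_div_iff₀ hlamMinPbar0]
    nlinarith [h1, h3]
  -- final assembly
  have hsq1 : Real.sqrt (e t ⬝ᵥ e t) ≤ Real.sqrt (V t₀ / lamMinP) :=
    Real.sqrt_le_sqrt heBound
  have hsq2 : Real.sqrt (φtil t ⬝ᵥ φtil t) ≤ Real.sqrt (lamMaxPbar / lamMinPbar)
      * Real.exp (-(lamQbar * (t - t₀)) / (2 * lamMaxPbar))
      * Real.sqrt (φtil t₀ ⬝ᵥ φtil t₀) := by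
    have h1 : Real.sqrt (φtil t ⬝ᵥ φtil t) ≤ Real.sqrt ((lamMaxPbar / lamMinPbar)
        * Real.exp (-(k * (t - t₀))) * (φtil t₀ ⬝ᵥ φtil t₀)) := Real.sqrt_le_sqrt hΦBound
    have h3 : Real.sqrt (Real.exp (-(k * (t - t₀))))
        = Real.exp (-(lamQbar * (t - t₀)) / (2 * lamMaxPbar)) := by
      have he : Real.exp (-(k * (t - t₀)))
          = (Real.exp (-(lamQbar * (t - t₀)) / (2 * lamMaxPbar)))^2 := by
        rw [sq, ← Real.exp_add]
        congr 1
        rw [hkdef]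
        field_simp
        ring
      rw [he, Real.sqrt_sq (Real.exp_pos _).le]
    have h2 : Real.sqrt ((lamMaxPbar / lamMinPbar) * Real.exp (-(k * (t - t₀)))
          * (φtil t₀ ⬝ᵥ φtil t₀))
        = Real.sqrt (lamMaxPbar / lamMinPbar) * Real.sqrt (Real.exp (-(k * (t - t₀))))
          * Real.sqrt (φtil t₀ ⬝ᵥ φtil t₀) := by
      rw [Real.sqrt_mul (by positivity), Real.sqrt_mul (by positivity)]
    rw [h2, h3] at h1
    exact h1
  rw [hδ t, abs_mul, abs_mul, abs_two]
  have hstep1 : 2 * |e t ⬝ᵥ P.mulVec b| * |θstar ⬝ᵥ φtil t|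
      ≤ 2 * (Real.sqrt (e t ⬝ᵥ e t) * Real.sqrt (P.mulVec b ⬝ᵥ P.mulVec b))
        * (Real.sqrt (θstar ⬝ᵥ θstar) * Real.sqrt (φtil t ⬝ᵥ φtil t)) := by
    have h1 := abs_dot_le (e t) (P.mulVec b)
    have h2 := abs_dot_le θstar (φtil t)
    have := mul_le_mul h1 h2 (abs_nonneg _) (by positivity)
    nlinarith [this, abs_nonneg (e t ⬝ᵥ P.mulVec b), abs_nonneg (θstar ⬝ᵥ φtil t)]
  calc 2 * |e t ⬝ᵥ P.mulVec b| * |θstar ⬝ᵥ φtil t|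
      ≤ 2 * (Real.sqrt (e t ⬝ᵥ e t) * Real.sqrt (P.mulVec b ⬝ᵥ P.mulVec b))
        * (Real.sqrt (θstar ⬝ᵥ θstar) * Real.sqrt (φtil t ⬝ᵥ φtil t)) := hstep1
    _ ≤ 2 * (Real.sqrt (V t₀ / lamMinP) * Real.sqrt (P.mulVec b ⬝ᵥ P.mulVec b))
        * (Real.sqrt (θstar ⬝ᵥ θstar) * (Real.sqrt (lamMaxPbar / lamMinPbar)
          * Real.exp (-(lamQbar * (t - t₀)) / (2 * lamMaxPbar))
          * Real.sqrt (φtil t₀ ⬝ᵥ φtil t₀))) := by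
        gcongr <;> positivity
    _ = 2 * Real.sqrt (P.mulVec b ⬝ᵥ P.mulVec b) * Real.sqrt (θstar ⬝ᵥ θstar)
        * Real.sqrt (V t₀ / lamMinP)
        * Real.sqrt (lamMaxPbar / lamMinPbar)
        * Real.exp (-(lamQbar * (t - t₀)) / (2 * lamMaxPbar))
        * Real.sqrt (φtil t₀ ⬝ᵥ φtil t₀) := by ring
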